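/- Let G be a local group and N a compact subgroup of G with normalizing neighborhood V. Then there is a symmetric open neighborhood U of 1 in G such that N ⊆ U ⊆ V and N is a normal subgroup of the restriction G|U. -/

import Mathlib

open scoped Topology

universe u v

section LocalGroupBasics

variable {G : Type u} {G' : Type v}

/-- A subset `X` of `G` is *symmetric* if `X = X⁻¹`, i.e. membership in `X` is
invariant under the inversion map. -/
def IsSymmetricSet (inv : G → G) (X : Set G) : Prop := ∀ x, x ∈ X ↔ inv x ∈ X

/-- The data `(one, inv, dom, mul)` on a topological space `G` is a *local group*:
`G` is Hausdorff, `dom ⊆ G × G` is open, inversion is continuous, multiplication is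
continuous on `dom`, and the identity, inverse and (local) associativity axioms hold.
(Here `mul` is a total function, but its values outside `dom` are irrelevant:
all axioms refer only to products taken inside `dom`.) -/
structure IsLocalGroup [TopologicalSpace G] (one : G) (inv : G → G)
    (dom : Set (G × G)) (mul : G → G → G) : Prop where
  t2 : T2Space G
  isOpen_dom : IsOpen dom
  continuous_inv : Continuous inv
  continuousOn_mul : ContinuousOn (fun p : G × G => mul p.1 p.2) dom
  mem_one_left : ∀ x : G, (one, x) ∈ dom
  mem_one_right : ∀ x : G, (x, one) ∈ dom
  one_mul : ∀ x : G, mul one x = x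
  mul_one : ∀ x : G, mul x one = x
  mem_inv_left : ∀ x : G, (inv x, x) ∈ dom
  mem_inv_right : ∀ x : G, (x, inv x) ∈ dom
  inv_mul : ∀ x : G, mul (inv x) x = one
  mul_inv : ∀ x : G, mul x (inv x) = one
  assoc : ∀ x y z : G, (x, y) ∈ dom → (y, z) ∈ dom →
    ((mul x y, z) ∈ dom ∨ (x, mul y z) ∈ dom) →
    (mul x y, z) ∈ dom ∧ (x, mul y z) ∈ dom ∧ mul (mul x y) z = mul x (mul y z)

/-- `abc` is defined: `(a,b) ∈ Ω`, `(b,c) ∈ Ω` and `(ab,c) ∈ Ω`. -/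
def TripleDefined (dom : Set (G × G)) (mul : G → G → G) (a b c : G) : Prop :=
  (a, b) ∈ dom ∧ (b, c) ∈ dom ∧ (mul a b, c) ∈ dom

/-- A *subgroup* of the local group: a symmetric subset `H` with `1 ∈ H`,
`H × H ⊆ Ω` and `xy ∈ H` for all `x, y ∈ H`. -/
def IsLGSubgroup (one : G) (inv : G → G) (dom : Set (G × G)) (mul : G → G → G)
    (H : Set G) : Prop :=
  IsSymmetricSet inv H ∧ one ∈ H ∧ ∀ x ∈ H, ∀ y ∈ H, (x, y) ∈ dom ∧ mul x y ∈ H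

/-- A *normal subgroup* of the local group: a subgroup `N` such that for all `x ∈ N`
and all `a ∈ G`, `a * x * a⁻¹` is defined and lies in `N`. -/
def IsLGNormalSubgroup (one : G) (inv : G → G) (dom : Set (G × G)) (mul : G → G → G)
    (N : Set G) : Prop :=
  IsLGSubgroup one inv dom mul N ∧
    ∀ x ∈ N, ∀ a : G, TripleDefined dom mul a x (inv a) ∧ mul (mul a x) (inv a) ∈ N

/-- A *morphism* of local groups: a continuous map `φ` such that whenever
`(x,y) ∈ Ω_G`, also `(φ x, φ y) ∈ Ω_{G'}` and `φ(xy) = φ(x)φ(y)`. -/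
def IsLGHom [TopologicalSpace G] [TopologicalSpace G'] (dom : Set (G × G))
    (mul : G → G → G) (dom' : Set (G' × G')) (mul' : G' → G' → G') (φ : G → G') : Prop :=
  Continuous φ ∧
    ∀ x y : G, (x, y) ∈ dom → (φ x, φ y) ∈ dom' ∧ φ (mul x y) = mul' (φ x) (φ y)

/-- A morphism is *strong* if `(φ x, φ y) ∈ Ω_{G'}` implies `(x, y) ∈ Ω_G`. -/
def IsStrong (dom : Set (G × G)) (dom' : Set (G' × G')) (φ : G → G') : Prop :=
  ∀ x y : G, (φ x, φ y) ∈ dom' → (x, y) ∈ dom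

/-- An *isomorphism* of local groups: a morphism with a two-sided inverse that is
also a morphism. -/
def IsLGIso [TopologicalSpace G] [TopologicalSpace G'] (dom : Set (G × G))
    (mul : G → G → G) (dom' : Set (G' × G')) (mul' : G' → G' → G') (φ : G → G') : Prop :=
  IsLGHom dom mul dom' mul' φ ∧
    ∃ ψ : G' → G, IsLGHom dom' mul' dom mul ψ ∧
      Function.LeftInverse ψ φ ∧ Function.RightInverse ψ φ

/-- A map `ι : G → G'` is *open onto its image* if the image of every open set
is open in the subspace `ι(G)` of `G'`. -/
def IsOpenOntoImage [TopologicalSpace G] [TopologicalSpace G'] (ι : G → G') : Prop :=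
  ∀ O : Set G, IsOpen O → ∃ O' : Set G', IsOpen O' ∧ O' ∩ Set.range ι = ι '' O

end LocalGroupBasics

section Restriction

variable {G : Type u}

/-- The identity of the restriction `G|U`. -/
def restrictOne (one : G) (U : Set G) (h : one ∈ U) : ↥U := ⟨one, h⟩

open Classical in
/-- The inversion of the restriction `G|U` (with an irrelevant junk value on
points whose inverse falls outside `U`; when `U` is symmetric this never happens). -/
noncomputable def restrictInv (inv : G → G) (U : Set G) : ↥U → ↥U := fun x =>
  if h : inv ↑x ∈ U then ⟨inv ↑x, h⟩ else x

/-- The domain `Ω_U = {(x,y) ∈ Ω ∩ (U × U) : xy ∈ U}` of the restriction `G|U`. -/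
def restrictDom (dom : Set (G × G)) (mul : G → G → G) (U : Set G) : Set (↥U × ↥U) :=
  {p | ((p.1 : G), (p.2 : G)) ∈ dom ∧ mul ↑p.1 ↑p.2 ∈ U}

open Classical in
/-- The product of the restriction `G|U` (with an irrelevant junk value outside
`Ω_U`). -/
noncomputable def restrictMul (mul : G → G → G) (U : Set G) : ↥U → ↥U → ↥U := fun x y =>
  if h : mul ↑x ↑y ∈ U then ⟨mul ↑x ↑y, h⟩ else x

end Restriction

section Cosets

variable {G : Type u}

/-- The left coset `aN`. -/
def lCoset (mul : G → G → G) (N : Set G) (a : G) : Set G := {y | ∃ x ∈ N, y = mul a x}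

/-- The right coset `Na`. -/
def rCoset (mul : G → G → G) (N : Set G) (a : G) : Set G := {y | ∃ x ∈ N, y = mul x a}

/-- The underlying set `{aN : a ∈ G}` of the quotient `G/N`. -/
def Cosets (mul : G → G → G) (N : Set G) : Type u :=
  {A : Set G // ∃ a : G, A = lCoset mul N a}

/-- The canonical map `π : G → G/N`, `π(a) = aN`. -/
def cosetMap (mul : G → G → G) (N : Set G) (a : G) : Cosets mul N :=
  ⟨lCoset mul N a, a, rfl⟩

/-- The quotient topology on `G/N`. -/
def cosetTop [t : TopologicalSpace G] (mul : G → G → G) (N : Set G) :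
    TopologicalSpace (Cosets mul N) :=
  t.coinduced (cosetMap mul N)

/-- The domain `Ω_{G/N} = {(aN, bN) : (a,b) ∈ Ω}` of the quotient `G/N`. -/
def cosetDom (dom : Set (G × G)) (mul : G → G → G) (N : Set G) :
    Set (Cosets mul N × Cosets mul N) :=
  {p | ∃ a b : G, (a, b) ∈ dom ∧ p = (cosetMap mul N a, cosetMap mul N b)}

end Cosets

section NSS

/-- A local group has *no small subgroups* (NSS) if some neighborhood of the
identity contains no subgroup other than `{1}`. (The topology is an explicit
argument, so that this can be applied to quotient topologies.) -/
def HasNSS {G : Type u} (t : TopologicalSpace G) (one : G) (inv : G → G)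
    (dom : Set (G × G)) (mul : G → G → G) : Prop :=
  ∃ W ∈ @nhds G t one, ∀ K : Set G, IsLGSubgroup one inv dom mul K → K ⊆ W → K = {one}

end NSS

section TopGroup

/-- `H`, with a given group structure and topology, is a topological group whose
operations are compatible with the ambient local group data on `G ⊇ H`. -/
def GroupStructureCompatible {G : Type u} [TopologicalSpace G] (one : G) (inv : G → G)
    (mul : G → G → G) (H : Set G) [Group ↥H] : Prop :=
  (((1 : ↥H) : G) = one) ∧ (∀ a b : ↥H, ((a * b : ↥H) : G) = mul ↑a ↑b) ∧
    (∀ a : ↥H, ((a⁻¹ : ↥H) : G) = inv ↑a) ∧ IsTopologicalGroup ↥H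

/-- The restriction `G|U` is isomorphic, as a local group, to the restriction `H|V`
of the (Hausdorff) topological group `H` to some symmetric open neighborhood `V` of
its identity. -/
def IsoToGroupRestriction {G : Type u} [TopologicalSpace G]
    (dom : Set (G × G)) (mul : G → G → G) (U : Set G)
    (H : Type u) [TopologicalSpace H] [Group H] : Prop :=
  IsTopologicalGroup H ∧ T2Space H ∧
    ∃ V : Set H, IsOpen V ∧ (1 : H) ∈ V ∧ IsSymmetricSet (fun h => h⁻¹) V ∧
      ∃ φ : ↥U → ↥V,
        IsLGIso (restrictDom dom mul U) (restrictMul mul U)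
          (restrictDom Set.univ (fun a b : H => a * b) V)
          (restrictMul (fun a b : H => a * b) V) φ

/-- The local group `(G, one, inv, dom, mul)` is *locally isomorphic to a
topological group*: some restriction of it is isomorphic, as a local group, to a
restriction of a (Hausdorff) topological group. -/
def LocallyIsoToTopGroup {G : Type u} [TopologicalSpace G] (one : G) (inv : G → G)
    (dom : Set (G × G)) (mul : G → G → G) : Prop :=
  ∃ U : Set G, IsOpen U ∧ one ∈ U ∧ IsSymmetricSet inv U ∧
    ∃ (H : Type u) (tH : TopologicalSpace H) (gH : Group H),
      @IsoToGroupRestriction G _ dom mul U H tH gH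

end TopGroup



section MyAux

variable {X : Type*} {Y : Type*} [TopologicalSpace X] [TopologicalSpace Y]

lemma myIsOpen_forall_mem_compact {K : Set X} (hK : IsCompact K) {W : Set (Y × X)}
    (hW : IsOpen W) : IsOpen {a : Y | ∀ x ∈ K, (a, x) ∈ W} := by
  rw [isOpen_iff_forall_mem_open]
  intro a ha
  obtain ⟨u, v, hu, _, hau, hKv, huv⟩ := generalized_tube_lemma isCompact_singleton hK hW
    (by rintro ⟨p, q⟩ ⟨hp, hq⟩; rcases hp with rfl; exact ha q hq)
  exact ⟨u, fun b hb x hx => huv ⟨hb, hKv hx⟩, hu, hau rfl⟩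

variable {G : Type u} [TopologicalSpace G] {one : G} {inv : G → G}
    {dom : Set (G × G)} {mul : G → G → G}

lemma my_eq_inv_of_mul_eq_one (hG : IsLocalGroup one inv dom mul) {u v : G}
    (h : (u, v) ∈ dom) (e : mul u v = one) : v = inv u := by
  obtain ⟨_, _, h3⟩ := hG.assoc (inv u) u v (hG.mem_inv_left u) h
    (Or.inl (by rw [hG.inv_mul]; exact hG.mem_one_left v))
  rw [hG.inv_mul, hG.one_mul, e, hG.mul_one] at h3
  exact h3

lemma my_inv_inv (hG : IsLocalGroup one inv dom mul) (a : G) : inv (inv a) = a :=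
  (my_eq_inv_of_mul_eq_one hG (hG.mem_inv_left a) (hG.inv_mul a)).symm

lemma my_inv_one (hG : IsLocalGroup one inv dom mul) : inv one = one :=
  (my_eq_inv_of_mul_eq_one hG (hG.mem_one_left one) (hG.one_mul one)).symm

lemma my_inv_mul_rev (hG : IsLocalGroup one inv dom mul) {a b : G}
    (h : (a, b) ∈ dom) (h' : (inv b, inv a) ∈ dom) :
    (mul a b, mul (inv b) (inv a)) ∈ dom ∧ inv (mul a b) = mul (inv b) (inv a) := by
  obtain ⟨hab_ib, _, e1⟩ := hG.assoc a b (inv b) h (hG.mem_inv_right b)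
    (Or.inr (by rw [hG.mul_inv]; exact hG.mem_one_right a))
  have e1' : mul (mul a b) (inv b) = a := by rw [e1, hG.mul_inv, hG.mul_one]
  obtain ⟨_, hdom2, e2⟩ := hG.assoc (mul a b) (inv b) (inv a) hab_ib h'
    (Or.inl (by rw [e1']; exact hG.mem_inv_right a))
  have e3 : mul (mul a b) (mul (inv b) (inv a)) = one := by
    rw [← e2, e1', hG.mul_inv]
  exact ⟨hdom2, (my_eq_inv_of_mul_eq_one hG hdom2 e3).symm⟩

end MyAux

/-- Lemma 2.2. If `N` is a compact subgroup of a local group `G`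
with normalizing neighborhood `V`, then there is a symmetric open neighborhood `U`
of `1` with `N ⊆ U ⊆ V` such that `N` is a normal subgroup of the restriction
`G|U`. -/
theorem normal_in_restriction_of_normalizing_nbhd
    {G : Type u} [TopologicalSpace G] (one : G) (inv : G → G)
    (dom : Set (G × G)) (mul : G → G → G)
    (hG : IsLocalGroup one inv dom mul)
    (N V : Set G)
    (hNsub : IsLGSubgroup one inv dom mul N) (hNcpt : IsCompact N)
    (hVo : IsOpen V) (h1V : one ∈ V) (hVs : IsSymmetricSet inv V) (hNV : N ⊆ V)
    (hnorm : ∀ a ∈ V, ∀ x ∈ N, TripleDefined dom mul a x (inv a) →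
      mul (mul a x) (inv a) ∈ V → mul (mul a x) (inv a) ∈ N) :
    ∃ (U : Set G) (hUo : IsOpen U) (hUs : IsSymmetricSet inv U) (h1U : one ∈ U),
      N ⊆ U ∧ U ⊆ V ∧
      IsLGNormalSubgroup (restrictOne one U h1U) (restrictInv inv U)
        (restrictDom dom mul U) (restrictMul mul U) {x : ↥U | (x : G) ∈ N} := by
  classical
  obtain ⟨hNsym, h1N, hNmul⟩ := hNsub
  -- The basic open condition `W` on pairs (a, x)
  set f : G × G → G × G := fun p => (mul p.1 p.2, inv p.1) with hf_def
  have hf : ContinuousOn f dom :=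
    hG.continuousOn_mul.prodMk ((hG.continuous_inv.comp continuous_fst).continuousOn)
  have hS1 : IsOpen (dom ∩ f ⁻¹' dom) :=
    hf.isOpen_inter_preimage hG.isOpen_dom hG.isOpen_dom
  have hg : ContinuousOn (fun p => mul (f p).1 (f p).2) (dom ∩ f ⁻¹' dom) :=
    hG.continuousOn_mul.comp (hf.mono Set.inter_subset_left) (fun p hp => hp.2)
  have hS2 : IsOpen ((dom ∩ f ⁻¹' dom) ∩ (fun p => mul (f p).1 (f p).2) ⁻¹' V) :=
    hg.isOpen_inter_preimage hS1 hVo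
  set W : Set (G × G) :=
    (((dom ∩ f ⁻¹' dom) ∩ (fun p => mul (f p).1 (f p).2) ⁻¹' V)
      ∩ (Prod.swap ⁻¹' dom)) ∩ ((fun p : G × G => (p.2, inv p.1)) ⁻¹' dom) with hW_def
  have hWopen : IsOpen W :=
    (hS2.inter (hG.isOpen_dom.preimage continuous_swap)).inter
      (hG.isOpen_dom.preimage (continuous_snd.prodMk (hG.continuous_inv.comp continuous_fst)))
  set A : Set G := V ∩ {a | ∀ x ∈ N, (a, x) ∈ W} with hA_def
  have hAopen : IsOpen A := hVo.inter (myIsOpen_forall_mem_compact hNcpt hWopen)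
  have hA1 : ∀ a ∈ A, ∀ x ∈ N, (a, x) ∈ dom := fun a ha x hx => (ha.2 x hx).1.1.1.1
  have hA4 : ∀ a ∈ A, ∀ x ∈ N, (mul a x, inv a) ∈ dom := fun a ha x hx => (ha.2 x hx).1.1.1.2
  have hA5 : ∀ a ∈ A, ∀ x ∈ N, mul (mul a x) (inv a) ∈ V := fun a ha x hx => (ha.2 x hx).1.1.2
  have hA2 : ∀ a ∈ A, ∀ x ∈ N, (x, a) ∈ dom := fun a ha x hx => (ha.2 x hx).1.2
  have hA3 : ∀ a ∈ A, ∀ x ∈ N, (x, inv a) ∈ dom := fun a ha x hx => (ha.2 x hx).2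
  have hNA : N ⊆ A := by
    intro a ha
    refine ⟨hNV ha, fun x hx => ?_⟩
    have hinva : inv a ∈ N := (hNsym a).1 ha
    have hax := hNmul a ha x hx
    exact ⟨⟨⟨⟨hax.1, (hNmul _ hax.2 _ hinva).1⟩, hNV (hNmul _ hax.2 _ hinva).2⟩,
      (hNmul x hx a ha).1⟩, (hNmul x hx _ hinva).1⟩
  set U0 : Set G := A ∩ inv ⁻¹' A with hU0_def
  have hU0open : IsOpen U0 := hAopen.inter (hAopen.preimage hG.continuous_inv)
  have hNU0 : N ⊆ U0 := fun a ha => ⟨hNA ha, hNA ((hNsym a).1 ha)⟩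
  have hU0V : U0 ⊆ V := fun a ha => ha.1.1
  -- the two-sided translate condition
  set h1 : G × (G × G) → G × G := fun q => (q.2.1, q.1) with hh1_def
  have hh1c : Continuous h1 := (continuous_snd.fst).prodMk continuous_fst
  have hO1 : IsOpen (h1 ⁻¹' dom) := hG.isOpen_dom.preimage hh1c
  set h2 : G × (G × G) → G × G := fun q => (mul q.2.1 q.1, q.2.2) with hh2_def
  have hh2c : ContinuousOn h2 (h1 ⁻¹' dom) :=
    (hG.continuousOn_mul.comp hh1c.continuousOn (fun q hq => hq)).prodMk
      (continuous_snd.snd).continuousOn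
  have hO2 : IsOpen ((h1 ⁻¹' dom) ∩ h2 ⁻¹' dom) :=
    hh2c.isOpen_inter_preimage hO1 hG.isOpen_dom
  have hg2 : ContinuousOn (fun q => mul (h2 q).1 (h2 q).2) ((h1 ⁻¹' dom) ∩ h2 ⁻¹' dom) :=
    hG.continuousOn_mul.comp (hh2c.mono Set.inter_subset_left) (fun q hq => hq.2)
  set O3 : Set (G × (G × G)) :=
    ((h1 ⁻¹' dom) ∩ h2 ⁻¹' dom) ∩ (fun q => mul (h2 q).1 (h2 q).2) ⁻¹' U0 with hO3_def
  have hO3open : IsOpen O3 := hg2.isOpen_inter_preimage hO2 hU0open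
  set U1 : Set G := {a | ∀ p ∈ N ×ˢ N, (a, p) ∈ O3} with hU1_def
  have hU1open : IsOpen U1 := myIsOpen_forall_mem_compact (hNcpt.prod hNcpt) hO3open
  have hU1a : ∀ a ∈ U1, ∀ x ∈ N, ∀ y ∈ N,
      (x, a) ∈ dom ∧ (mul x a, y) ∈ dom ∧ mul (mul x a) y ∈ U0 := by
    intro a ha x hx y hy
    have h := ha (x, y) ⟨hx, hy⟩
    exact ⟨h.1.1, h.1.2, h.2⟩
  have hNU1 : N ⊆ U1 := by
    intro a ha p hp
    obtain ⟨hx, hy⟩ := hp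
    have h1m := hNmul p.1 hx a ha
    have h2m := hNmul _ h1m.2 p.2 hy
    exact ⟨⟨h1m.1, h2m.1⟩, hNU0 h2m.2⟩
  have hU1U0 : U1 ⊆ U0 := by
    intro a ha
    have h := (hU1a a ha one h1N one h1N).2.2
    rwa [hG.one_mul, hG.mul_one] at h
  have hU1r : ∀ a ∈ U1, ∀ z ∈ N, mul a z ∈ U1 := by
    intro a ha z hz p hp
    obtain ⟨hx, hy⟩ := hp
    have hAa : a ∈ A := (hU1U0 ha).1
    have hdaz : (a, z) ∈ dom := hA1 a hAa z hz
    have t1 := hU1a a ha p.1 hx z hz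
    have hzy := hNmul z hz p.2 hy
    have t2 := hU1a a ha p.1 hx (mul z p.2) hzy.2
    obtain ⟨_, hx_az, e1⟩ := hG.assoc p.1 a z t1.1 hdaz (Or.inl t1.2.1)
    obtain ⟨hxaz_y, _, e2⟩ := hG.assoc (mul p.1 a) z p.2 t1.2.1 hzy.1 (Or.inr t2.2.1)
    refine ⟨⟨hx_az, ?_⟩, ?_⟩
    · show (mul p.1 (mul a z), p.2) ∈ dom
      rw [← e1]; exact hxaz_y
    · show mul (mul p.1 (mul a z)) p.2 ∈ U0
      rw [← e1, e2]; exact t2.2.2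
  have hU1l : ∀ a ∈ U1, ∀ z ∈ N, mul z a ∈ U1 := by
    intro a ha z hz p hp
    obtain ⟨hx, hy⟩ := hp
    have hAa : a ∈ A := (hU1U0 ha).1
    have hxz := hNmul p.1 hx z hz
    have hza : (z, a) ∈ dom := hA2 a hAa z hz
    have hxza : (mul p.1 z, a) ∈ dom := hA2 a hAa _ hxz.2
    obtain ⟨_, hx_za, e1⟩ := hG.assoc p.1 z a hxz.1 hza (Or.inl hxza)
    have t := hU1a a ha (mul p.1 z) hxz.2 p.2 hy
    refine ⟨⟨hx_za, ?_⟩, ?_⟩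
    · show (mul p.1 (mul z a), p.2) ∈ dom
      rw [← e1]; exact t.2.1
    · show mul (mul p.1 (mul z a)) p.2 ∈ U0
      rw [← e1]; exact t.2.2
  -- the final symmetric neighborhood
  set Uf : Set G := U1 ∩ inv ⁻¹' U1 with hUf_def
  have hUfopen : IsOpen Uf := hU1open.inter (hU1open.preimage hG.continuous_inv)
  have hNUf : N ⊆ Uf := fun a ha => ⟨hNU1 ha, hNU1 ((hNsym a).1 ha)⟩
  have hUfsym : IsSymmetricSet inv Uf := by
    intro a
    constructor
    · intro ha
      refine ⟨ha.2, ?_⟩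
      show inv (inv a) ∈ U1
      rw [my_inv_inv hG]; exact ha.1
    · intro ha
      have h2a : inv (inv a) ∈ U1 := ha.2
      rw [my_inv_inv hG] at h2a
      exact ⟨h2a, ha.1⟩
  have h1Uf : one ∈ Uf := hNUf h1N
  have hUfV : Uf ⊆ V := fun b hb => hU0V (hU1U0 hb.1)
  have hUfr : ∀ a ∈ Uf, ∀ z ∈ N, mul a z ∈ Uf := by
    intro a ha z hz
    have hAa : a ∈ A := (hU1U0 ha.1).1
    refine ⟨hU1r a ha.1 z hz, ?_⟩
    show inv (mul a z) ∈ U1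
    have hrev := my_inv_mul_rev hG (hA1 a hAa z hz) (hA3 a hAa (inv z) ((hNsym z).1 hz))
    rw [hrev.2]
    exact hU1l (inv a) ha.2 (inv z) ((hNsym z).1 hz)
  have hUfxinv : ∀ a ∈ Uf, ∀ x ∈ N, (x, inv a) ∈ dom ∧ mul x (inv a) ∈ Uf := by
    intro a ha x hx
    have hAa : a ∈ A := (hU1U0 ha.1).1
    have hd : (x, inv a) ∈ dom := hA3 a hAa x hx
    refine ⟨hd, hU1l (inv a) ha.2 x hx, ?_⟩
    show inv (mul x (inv a)) ∈ U1
    have hd2 : (inv (inv a), inv x) ∈ dom := by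
      rw [my_inv_inv hG]; exact hA1 a hAa (inv x) ((hNsym x).1 hx)
    have hrev := my_inv_mul_rev hG hd hd2
    rw [hrev.2, my_inv_inv hG]
    exact hU1r a ha.1 (inv x) ((hNsym x).1 hx)
  refine ⟨Uf, hUfopen, hUfsym, h1Uf, hNUf, hUfV, ?_, ?_⟩
  · -- subgroup
    refine ⟨?_, h1N, ?_⟩
    · intro x
      have hxU : inv (x : G) ∈ Uf := (hUfsym (x : G)).1 x.2
      have e : restrictInv inv Uf x = ⟨inv (x : G), hxU⟩ := dif_pos hxU
      constructor
      · intro hx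
        show ((restrictInv inv Uf x : ↥Uf) : G) ∈ N
        rw [e]
        exact (hNsym (x : G)).1 hx
      · intro hx
        have hx' : ((restrictInv inv Uf x : ↥Uf) : G) ∈ N := hx
        rw [e] at hx'
        exact (hNsym (x : G)).2 hx'
    · intro x hx y hy
      have hxN : (x : G) ∈ N := hx
      have hyN : (y : G) ∈ N := hy
      have hxyN : mul (x : G) (y : G) ∈ N := (hNmul _ hxN _ hyN).2
      have hxyU : mul (x : G) (y : G) ∈ Uf := hNUf hxyN
      refine ⟨⟨(hNmul _ hxN _ hyN).1, hxyU⟩, ?_⟩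
      show ((restrictMul mul Uf x y : ↥Uf) : G) ∈ N
      have em : restrictMul mul Uf x y = ⟨mul (x : G) (y : G), hxyU⟩ := dif_pos hxyU
      rw [em]
      exact hxyN
  · -- normality
    intro x hx a
    have hxN : (x : G) ∈ N := hx
    have haU1 : (a : G) ∈ U1 := a.2.1
    have hAa : (a : G) ∈ A := (hU1U0 haU1).1
    have hiaUf : inv (a : G) ∈ Uf := (hUfsym (a : G)).1 a.2
    have eInv : restrictInv inv Uf a = ⟨inv (a : G), hiaUf⟩ := dif_pos hiaUf
    have hd1 : ((a : G), (x : G)) ∈ dom := hA1 _ hAa _ hxN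
    have haxUf : mul (a : G) (x : G) ∈ Uf := hUfr _ a.2 _ hxN
    have eM1 : restrictMul mul Uf a x = ⟨mul (a : G) (x : G), haxUf⟩ := dif_pos haxUf
    have hd2 := hUfxinv _ a.2 _ hxN
    have hd3 : (mul (a : G) (x : G), inv (a : G)) ∈ dom := hA4 _ hAa _ hxN
    have hconjN : mul (mul (a : G) (x : G)) (inv (a : G)) ∈ N :=
      hnorm _ (hUfV a.2) _ hxN ⟨hd1, hd2.1, hd3⟩ (hA5 _ hAa _ hxN)
    have hconjUf : mul (mul (a : G) (x : G)) (inv (a : G)) ∈ Uf := hNUf hconjN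
    have eM2 : restrictMul mul Uf (⟨mul (a : G) (x : G), haxUf⟩ : ↥Uf)
        (⟨inv (a : G), hiaUf⟩ : ↥Uf)
        = ⟨mul (mul (a : G) (x : G)) (inv (a : G)), hconjUf⟩ := dif_pos hconjUf
    refine ⟨⟨⟨hd1, haxUf⟩, ?_, ?_⟩, ?_⟩
    · rw [eInv]
      exact ⟨hd2.1, hd2.2⟩
    · rw [eInv, eM1]
      exact ⟨hd3, hconjUf⟩
    · show ((restrictMul mul Uf (restrictMul mul Uf a x) (restrictInv inv Uf a) : ↥Uf) : G) ∈ N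
      rw [eM1, eInv, eM2]
      exact hconjN
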